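/- ∫ from π/3 to 2π/3 of log(sin θ) dθ = -(π/3)·log 2 + Σ_{n≥1} sin(2πn/3)/n². -/

import Mathlib

open Real Filter MeasureTheory intervalIntegral Topology

noncomputable def wf (r θ : ℝ) : ℂ := 1 - (r : ℂ) * Complex.exp (2 * θ * Complex.I)

lemma normSq_wf (r θ : ℝ) :
    Complex.normSq (wf r θ) = 1 - 2 * r * Real.cos (2 * θ) + r ^ 2 := by
  have h : (2 * (θ:ℂ) * Complex.I) = ((2*θ : ℝ) : ℂ) * Complex.I := by push_cast; ring
  rw [wf, h, Complex.exp_mul_I, ← Complex.ofReal_cos, ← Complex.ofReal_sin]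
  simp only [Complex.normSq_apply, Complex.sub_re, Complex.sub_im, Complex.one_re, Complex.one_im,
    Complex.mul_re, Complex.mul_im, Complex.ofReal_re, Complex.ofReal_im, Complex.add_re,
    Complex.add_im, Complex.I_re, Complex.I_im]
  nlinarith [Real.sin_sq_add_cos_sq (2*θ)]

lemma one_le_abs_wf {r θ : ℝ} (hr : 0 ≤ r) (hθ : Real.cos (2*θ) ≤ 0) :
    1 ≤ ‖wf r θ‖ := by
  have h1 : 1 ≤ Complex.normSq (wf r θ) := by
    rw [normSq_wf]; nlinarith
  nlinarith [Complex.sq_norm (wf r θ), norm_nonneg (wf r θ)]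

lemma abs_wf_le_two {r θ : ℝ} (hr0 : 0 ≤ r) (hr1 : r ≤ 1) :
    ‖wf r θ‖ ≤ 2 := by
  rw [wf]
  calc ‖(1:ℂ) - (r:ℂ) * Complex.exp (2 * θ * Complex.I)‖
      ≤ ‖(1:ℂ)‖ + ‖(r:ℂ) * Complex.exp (2 * θ * Complex.I)‖ := norm_sub_le _ _
    _ ≤ 2 := by
        have h : (2 * (θ:ℂ) * Complex.I) = ((2*θ : ℝ) : ℂ) * Complex.I := by push_cast; ring
        rw [norm_mul, h]
        simp only [Complex.norm_exp_ofReal_mul_I, Complex.norm_real, Real.norm_eq_abs,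
          abs_of_nonneg hr0, mul_one, norm_one]
        linarith

lemma abs_wf_one {θ : ℝ} (h0 : 0 ≤ θ) (hπ : θ ≤ π) :
    ‖wf 1 θ‖ = 2 * Real.sin θ := by
  have hs : 0 ≤ Real.sin θ := Real.sin_nonneg_of_nonneg_of_le_pi h0 hπ
  have h1 : Complex.normSq (wf 1 θ) = (2 * Real.sin θ)^2 := by
    rw [normSq_wf, Real.cos_two_mul']
    nlinarith [Real.sin_sq_add_cos_sq θ]
  have := Complex.sq_norm (wf 1 θ)
  nlinarith [norm_nonneg (wf 1 θ)]

lemma cos_two_theta_nonpos {θ : ℝ} (h1 : π/3 ≤ θ) (h2 : θ ≤ 2*π/3) :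
    Real.cos (2*θ) ≤ 0 := by
  apply Real.cos_nonpos_of_pi_div_two_le_of_le
  · nlinarith [Real.pi_pos]
  · nlinarith [Real.pi_pos]

lemma log_abs_wf_bound {r θ : ℝ} (hr0 : 0 ≤ r) (hr1 : r ≤ 1)
    (h1 : π/3 ≤ θ) (h2 : θ ≤ 2*π/3) :
    |Real.log (‖wf r θ‖)| ≤ Real.log 2 := by
  have hlow := one_le_abs_wf hr0 (cos_two_theta_nonpos h1 h2)
  have hhigh := abs_wf_le_two (θ := θ) hr0 hr1
  rw [abs_of_nonneg (Real.log_nonneg hlow)]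
  exact Real.log_le_log (by linarith) hhigh

lemma continuous_abs_wf_r (θ : ℝ) : Continuous fun r : ℝ => ‖wf r θ‖ := by
  unfold wf
  exact continuous_norm.comp (by fun_prop)

lemma continuous_abs_wf_theta (r : ℝ) : Continuous fun θ : ℝ => ‖wf r θ‖ := by
  unfold wf
  exact continuous_norm.comp (by fun_prop)

lemma hasSum_log_wf {r : ℝ} (θ : ℝ) (hr : |r| < 1) :
    HasSum (fun n : ℕ ↦ -(r ^ (n+1) * Real.cos (2 * (n+1) * θ) / (n+1)))
      (Real.log (‖wf r θ‖)) := by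
  set z : ℂ := (r : ℂ) * Complex.exp (2 * θ * Complex.I) with hz
  have hnz : ‖z‖ < 1 := by
    have h : (2 * (θ:ℂ) * Complex.I) = ((2*θ : ℝ) : ℂ) * Complex.I := by push_cast; ring
    rw [hz, norm_mul, h,
      Complex.norm_exp_ofReal_mul_I, Complex.norm_real, Real.norm_eq_abs, mul_one]
    exact hr
  have H := Complex.hasSum_taylorSeries_neg_log hnz
  have Hre := Complex.hasSum_re H
  have hre : ∀ n : ℕ, (z ^ n / (n:ℂ)).re = r ^ n * Real.cos (2 * n * θ) / n := by
    intro n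
    have hzn : z ^ n = ((r ^ n : ℝ) : ℂ) * Complex.exp (((2 * n * θ : ℝ):ℂ) * Complex.I) := by
      rw [hz, mul_pow, ← Complex.exp_nat_mul]
      push_cast; ring_nf
    rw [hzn, Complex.exp_mul_I, ← Complex.ofReal_cos, ← Complex.ofReal_sin]
    rcases Nat.eq_zero_or_pos n with h0 | hpos
    · subst h0; simp
    · rw [div_eq_mul_inv, ← Complex.ofReal_natCast, ← Complex.ofReal_inv]
      simp only [Complex.mul_re, Complex.add_re, Complex.add_im, Complex.ofReal_re,
        Complex.ofReal_im, Complex.mul_im, Complex.I_re, Complex.I_im]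
      ring
  have Hre' : HasSum (fun n : ℕ ↦ r ^ n * Real.cos (2 * n * θ) / n)
      ((-Complex.log (1 - z)).re) := Hre.congr_fun fun n => (hre n).symm
  have hval : (-Complex.log (1 - z)).re = -(Real.log (‖wf r θ‖)) := by
    rw [Complex.neg_re, Complex.log_re]; rfl
  rw [hval] at Hre'
  have Hneg := Hre'.neg
  rw [neg_neg] at Hneg
  have := (hasSum_nat_add_iff' (f := fun n : ℕ ↦ -(r ^ n * Real.cos (2 * (n:ℝ) * θ) / n)) 1).mpr Hneg
  simpa using this

lemma integral_cos_freq (n : ℕ) :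
    ∫ θ in (π/3)..(2*π/3), Real.cos (2 * (n+1) * θ) =
      -(Real.sin (2 * π * (n+1) / 3) / (n+1)) := by
  have hc : (2 * ((n:ℝ)+1)) ≠ 0 := by positivity
  have h := intervalIntegral.integral_comp_mul_left (a := π/3) (b := 2*π/3)
    (fun x => Real.cos x) hc
  rw [h, integral_cos]
  have h1 : 2 * ((n:ℝ)+1) * (2*π/3) = ((n+1 : ℕ) : ℝ) * (2 * π) - 2 * π * ((n:ℝ)+1) / 3 := by
    push_cast; ring
  have h2 : 2 * ((n:ℝ)+1) * (π/3) = 2 * π * ((n:ℝ)+1) / 3 := by ring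
  rw [h1, h2, Real.sin_nat_mul_two_pi_sub, smul_eq_mul]
  field_simp
  ring

noncomputable def If (r : ℝ) : ℝ := ∫ θ in (π/3)..(2*π/3), Real.log (‖wf r θ‖)

lemma hasSum_If {r : ℝ} (hr0 : 0 ≤ r) (hr1 : r < 1) :
    HasSum (fun n : ℕ ↦ r ^ (n+1) * (Real.sin (2 * π * (n+1) / 3) / (n+1) ^ 2)) (If r) := by
  have key : HasSum (fun n : ℕ ↦ ∫ θ in (π/3)..(2*π/3),
      -(r ^ (n+1) * Real.cos (2 * (n+1) * θ) / (n+1))) (If r) := by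
    apply intervalIntegral.hasSum_integral_of_dominated_convergence
      (bound := fun n _ => r ^ (n+1))
    · intro n
      apply Continuous.aestronglyMeasurable
      fun_prop
    · intro n
      filter_upwards with θ _
      have h1 : |Real.cos (2 * ((n:ℝ)+1) * θ)| ≤ 1 := Real.abs_cos_le_one _
      have h2 : (1:ℝ) ≤ (n:ℝ) + 1 := by linarith [Nat.cast_nonneg (α := ℝ) n]
      have h3 : (0:ℝ) ≤ r ^ (n+1) := by positivity
      rw [Real.norm_eq_abs, abs_neg, abs_div, abs_mul, abs_of_nonneg h3,
        abs_of_nonneg (by positivity : (0:ℝ) ≤ (n:ℝ)+1)]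
      rw [div_le_iff₀ (by positivity : (0:ℝ) < (n:ℝ)+1)]
      nlinarith [abs_nonneg (Real.cos (2 * ((n:ℝ)+1) * θ))]
    · filter_upwards with θ _
      exact (summable_geometric_of_lt_one hr0 hr1).mul_left r |>.congr fun n => by ring
    · exact intervalIntegrable_const
    · filter_upwards with θ _
      exact hasSum_log_wf θ (by rwa [abs_of_nonneg hr0])
  refine key.congr_fun fun n => ?_
  have : (fun θ => -(r ^ (n+1) * Real.cos (2 * ((n:ℝ)+1) * θ) / ((n:ℝ)+1)))
      = fun θ => (-(r ^ (n+1) / ((n:ℝ)+1))) * Real.cos (2 * ((n:ℝ)+1) * θ) := by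
    funext θ; ring
  rw [this, intervalIntegral.integral_const_mul, integral_cos_freq]
  have hn : ((n:ℝ)+1) ≠ 0 := by positivity
  field_simp

lemma If_one : If 1 = π/3 * Real.log 2 + ∫ θ in (π/3)..(2*π/3), Real.log (Real.sin θ) := by
  have hcongr : If 1 = ∫ θ in (π/3)..(2*π/3), (Real.log 2 + Real.log (Real.sin θ)) := by
    apply intervalIntegral.integral_congr
    intro θ hθ
    rw [Set.uIcc_of_le (by nlinarith [Real.pi_pos]), Set.mem_Icc] at hθ
    have hθ0 : 0 < θ := lt_of_lt_of_le (by positivity) hθ.1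
    have hθπ : θ < π := lt_of_le_of_lt hθ.2 (by nlinarith [Real.pi_pos])
    have hs : 0 < Real.sin θ := Real.sin_pos_of_pos_of_lt_pi hθ0 hθπ
    simp only
    rw [abs_wf_one hθ0.le hθπ.le, Real.log_mul two_ne_zero hs.ne']
  rw [hcongr]
  have hint : IntervalIntegrable (fun θ => Real.log (Real.sin θ)) volume (π/3) (2*π/3) := by
    apply ContinuousOn.intervalIntegrable
    apply Real.continuousOn_log.comp Real.continuous_sin.continuousOn
    intro θ hθ
    rw [Set.uIcc_of_le (by nlinarith [Real.pi_pos]), Set.mem_Icc] at hθ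
    have hθ0 : 0 < θ := lt_of_lt_of_le (by positivity) hθ.1
    have hθπ : θ < π := lt_of_le_of_lt hθ.2 (by nlinarith [Real.pi_pos])
    exact (Real.sin_pos_of_pos_of_lt_pi hθ0 hθπ).ne'
  rw [intervalIntegral.integral_add intervalIntegrable_const hint,
    intervalIntegral.integral_const]
  have : (2*π/3 - π/3) = π/3 := by ring
  rw [this, smul_eq_mul]

/-- `∫_{π/3}^{2π/3} log(sin θ) dθ = -(π/3) log 2 + ∑_{n≥1} sin(2πn/3)/n²`. -/
theorem integral_log_sin :
    ∫ θ in (π / 3)..(2 * π / 3), Real.log (Real.sin θ) =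
      -(π / 3) * Real.log 2 + ∑' n : ℕ, Real.sin (2 * π * (n + 1) / 3) / (n + 1) ^ 2 := by
  set r : ℕ → ℝ := fun k => 1 - 1/(k+1) with hrdef
  have hr0 : ∀ k, 0 ≤ r k := by
    intro k
    have : 1/((k:ℝ)+1) ≤ 1 := by
      rw [div_le_one (by positivity)]; linarith [Nat.cast_nonneg (α := ℝ) k]
    simp only [hrdef]; linarith
  have hr1 : ∀ k, r k < 1 := by
    intro k
    have : 0 < 1/((k:ℝ)+1) := by positivity
    simp only [hrdef]; linarith
  have hrt : Tendsto r atTop (𝓝 1) := by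
    have h0 : Tendsto (fun k : ℕ => 1/((k:ℝ)+1)) atTop (𝓝 0) :=
      tendsto_one_div_add_atTop_nhds_zero_nat
    have h := (tendsto_const_nhds (x := (1:ℝ)) (f := atTop (α := ℕ))).sub h0
    simpa [hrdef, one_div] using h
  -- limit of integrals
  have hA : Tendsto (fun k => If (r k)) atTop (𝓝 (If 1)) := by
    apply intervalIntegral.tendsto_integral_filter_of_dominated_convergence
      (bound := fun _ => Real.log 2)
    · filter_upwards with k
      exact (Real.measurable_log.comp (continuous_abs_wf_theta (r k)).measurable).aestronglyMeasurable
    · filter_upwards with k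
      filter_upwards with θ hθ
      rw [Set.uIoc_of_le (by nlinarith [Real.pi_pos]), Set.mem_Ioc] at hθ
      exact log_abs_wf_bound (hr0 k) (hr1 k).le hθ.1.le hθ.2
    · exact intervalIntegrable_const
    · filter_upwards with θ hθ
      rw [Set.uIoc_of_le (by nlinarith [Real.pi_pos]), Set.mem_Ioc] at hθ
      have hθ0 : 0 < θ := lt_trans (by positivity) hθ.1
      have hθπ : θ < π := lt_of_le_of_lt hθ.2 (by nlinarith [Real.pi_pos])
      have hpos : 0 < ‖wf 1 θ‖ := by
        rw [abs_wf_one hθ0.le hθπ.le]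
        have := Real.sin_pos_of_pos_of_lt_pi hθ0 hθπ
        linarith
      have hg : Tendsto (fun k => ‖wf (r k) θ‖) atTop (𝓝 (‖wf 1 θ‖)) :=
        ((continuous_abs_wf_r θ).continuousAt.tendsto).comp hrt
      exact ((Real.continuousAt_log hpos.ne').tendsto).comp hg
  -- limit of sums
  have hB : Tendsto (fun k => ∑' n : ℕ, (r k) ^ (n+1) * (Real.sin (2 * π * (n+1) / 3) / (n+1) ^ 2))
      atTop (𝓝 (∑' n : ℕ, Real.sin (2 * π * (n + 1) / 3) / (n + 1) ^ 2)) := by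
    apply tendsto_tsum_of_dominated_convergence (bound := fun n : ℕ => 1/((n:ℝ)+1)^2)
    · have h := Real.summable_one_div_nat_pow.mpr (by norm_num : 1 < 2)
      have := (summable_nat_add_iff (f := fun n : ℕ => 1/(n:ℝ)^2) 1).mpr h
      exact this.congr fun n => by push_cast; ring_nf
    · intro n
      have h1 : Tendsto (fun k => (r k) ^ (n+1)) atTop (𝓝 (1 ^ (n+1))) := hrt.pow (n+1)
      have := h1.mul_const (Real.sin (2 * π * ((n:ℝ)+1) / 3) / ((n:ℝ)+1) ^ 2)
      simpa using this
    · filter_upwards with k n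
      have h1 : |(r k) ^ (n+1)| ≤ 1 := by
        rw [abs_pow, abs_of_nonneg (hr0 k)]
        exact pow_le_one₀ (hr0 k) (hr1 k).le
      have h2 : |Real.sin (2 * π * ((n:ℝ)+1) / 3)| ≤ 1 := Real.abs_sin_le_one _
      rw [Real.norm_eq_abs, abs_mul, abs_div, abs_of_nonneg (by positivity : (0:ℝ) ≤ ((n:ℝ)+1)^2)]
      calc |(r k) ^ (n+1)| * (|Real.sin (2 * π * ((n:ℝ)+1) / 3)| / ((n:ℝ)+1)^2)
          ≤ 1 * (1 / ((n:ℝ)+1)^2) := by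
            apply mul_le_mul h1 _ (by positivity) one_pos.le
            apply div_le_div_of_nonneg_right h2 (by positivity) |>.trans_eq rfl
        _ = 1 / ((n:ℝ)+1)^2 := by ring
  -- combine
  have heq : (fun k => If (r k)) = fun k => ∑' n : ℕ,
      (r k) ^ (n+1) * (Real.sin (2 * π * (n+1) / 3) / (n+1) ^ 2) := by
    funext k
    exact ((hasSum_If (hr0 k) (hr1 k)).tsum_eq).symm
  rw [heq] at hA
  have hI1 := tendsto_nhds_unique hA hB
  have := If_one
  rw [hI1] at this
  linarith
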